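/- Let κ ∈ ℂ, δ > 0, S > 0, and let R > 1 satisfy exp(R−1) > −log δ and exp(R) ≥ exp(R−1) + S + 1 + |κ|. Suppose z ∈ ℂ satisfies Re(z) ≥ R and, for all n ≥ 1, |Im(E_κ^n(z))| < S and Re(E_κ^n(z)) > log δ. Then z is an escaping point of E_κ; in fact Re(E_κ^n(z)) → +∞ and |E_κ^n(z)| → ∞ as n → ∞. -/

import Mathlib

open Filter Complex

/-- Under the conditions of the paper's final proof, the point `z` is an escaping point
of `E_κ(w) = exp w + κ`: indeed `Re (E_κ^[n] z) → +∞` and `|E_κ^[n] z| → ∞`. -/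
theorem orbit_escapes (κ : ℂ) (δ S R : ℝ) (hδ : 0 < δ) (hS : 0 < S)
    (hR : 1 < R)
    (hR1 : Real.exp (R - 1) > -Real.log δ)
    (hR2 : Real.exp R ≥ Real.exp (R - 1) + S + 1 + ‖κ‖)
    (z : ℂ) (hz : R ≤ z.re)
    (him : ∀ n : ℕ, 1 ≤ n → |((fun w => Complex.exp w + κ)^[n] z).im| < S)
    (hre : ∀ n : ℕ, 1 ≤ n → ((fun w => Complex.exp w + κ)^[n] z).re > Real.log δ) :
    Tendsto (fun n => ((fun w => Complex.exp w + κ)^[n] z).re) atTop atTop ∧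
      Tendsto (fun n => ‖(fun w => Complex.exp w + κ)^[n] z‖)
        atTop atTop := by
  set f : ℂ → ℂ := fun w => Complex.exp w + κ with hf
  have key : ∀ n : ℕ, R + n ≤ (f^[n] z).re := by
    intro n
    induction n with
    | zero => simpa using hz
    | succ n ih =>
      set x : ℝ := (f^[n] z).re with hx
      have hxn : R ≤ x := by
        have : (0:ℝ) ≤ n := Nat.cast_nonneg n
        linarith
      -- lower bound on |f^[n+1] z|
      have habs : Real.exp x - ‖κ‖ ≤ ‖f^[n+1] z‖ := by
        rw [Function.iterate_succ_apply']
        have h1 : ‖Complex.exp (f^[n] z)‖ ≤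
            ‖Complex.exp (f^[n] z) + κ‖ + ‖κ‖ := by
          calc ‖Complex.exp (f^[n] z)‖
              = ‖(Complex.exp (f^[n] z) + κ) + (-κ)‖ := by ring_nf
            _ ≤ ‖Complex.exp (f^[n] z) + κ‖ + ‖-κ‖ :=
                norm_add_le _ _
            _ = ‖Complex.exp (f^[n] z) + κ‖ + ‖κ‖ := by rw [norm_neg]
        have h2 := Complex.norm_exp (f^[n] z)
        simp only [hf]
        linarith
      have him' := him (n + 1) (by omega)
      have hre' := hre (n + 1) (by omega)
      have htri : ‖f^[n+1] z‖ ≤ |(f^[n+1] z).re| + |(f^[n+1] z).im| :=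
        Complex.norm_le_abs_re_add_abs_im _
      have h2 : Real.exp x - ‖κ‖ - S ≤ |(f^[n+1] z).re| := by linarith
      -- exp lower bound: e^x ≥ e^R + (x - R)
      have hexp : Real.exp R + (x - R) ≤ Real.exp x := by
        have h3 : Real.exp x = Real.exp R * Real.exp (x - R) := by
          rw [← Real.exp_add]; ring_nf
        have h4 : (x - R) + 1 ≤ Real.exp (x - R) := Real.add_one_le_exp _
        have h5 : (1:ℝ) ≤ Real.exp R := Real.one_le_exp (by linarith)
        nlinarith [Real.exp_pos R]
      have hRlow : R ≤ Real.exp (R - 1) := by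
        have := Real.add_one_le_exp (R - 1); linarith
      -- c := e^x - |κ| - S ≥ e^{R-1} + 1 + n
      have hc : Real.exp (R - 1) + 1 + n ≤ Real.exp x - ‖κ‖ - S := by
        have : (R : ℝ) + n ≤ x := ih
        linarith
      -- exclude negative branch
      have hneg : Real.log δ ≤ (f^[n+1] z).re := le_of_lt hre'
      have hpos : Real.exp x - ‖κ‖ - S ≤ (f^[n+1] z).re := by
        rcases abs_cases ((f^[n+1] z).re) with ⟨heq, _⟩ | ⟨heq, _⟩
        · linarith
        · exfalso
          have : (f^[n+1] z).re ≤ -(Real.exp x - ‖κ‖ - S) := by linarith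
          have hn0 : (0:ℝ) ≤ n := Nat.cast_nonneg n
          linarith
      have hn0 : (0:ℝ) ≤ n := Nat.cast_nonneg n
      have : R + (n + 1 : ℕ) = R + n + 1 := by push_cast; ring
      rw [this]
      linarith
  refine ⟨?_, ?_⟩
  · apply tendsto_atTop_mono key
    exact tendsto_atTop_add_const_left _ R tendsto_natCast_atTop_atTop
  · apply tendsto_atTop_mono (fun n => le_trans (key n) (Complex.re_le_norm _))
    exact tendsto_atTop_add_const_left _ R tendsto_natCast_atTop_atTop
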